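/- Let p be a prime, Γ ≅ ℤ_p a profinite group with closed subgroups Γ_n = Γ^{p^n}, and let M be a discrete Γ-module over 𝔽_p which is cofinitely generated over Λ̄ = 𝔽_p[[Γ]] ≅ 𝔽_p[[T]]. If dim_{𝔽_p} M^{Γ_n} = 2p^n for all n ≥ 0, then the Pontryagin dual M^∨ is a free Λ̄-module of rank 2. -/

import Mathlib

section PontryaginDual

variable (p : ℕ) [Fact p.Prime] (M : Type) [AddCommGroup M] [Module (ZMod p) M]
  [Module (PowerSeries (ZMod p)) M] [SMulCommClass (ZMod p) (PowerSeries (ZMod p)) M]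

/-- Multiplication by `a ∈ Λ̄ = 𝔽_p[[T]]` as an `𝔽_p`-linear map on `M`. -/
noncomputable def smulLM (a : PowerSeries (ZMod p)) : M →ₗ[ZMod p] M where
  toFun m := a • m
  map_add' x y := smul_add a x y
  map_smul' c m := (smul_comm c a m).symm

/-- The Pontryagin dual of a discrete `Λ̄`-module `M` (an `𝔽_p`-vector space), namely its
full `𝔽_p`-linear dual. -/
def PDual : Type := M →ₗ[ZMod p] ZMod p

instance : AddCommGroup (PDual p M) :=
  inferInstanceAs (AddCommGroup (M →ₗ[ZMod p] ZMod p))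

/-- A `PDual` element as a bona fide linear map. -/
def PDual.lin (f : PDual p M) : M →ₗ[ZMod p] ZMod p := f

/-- The `Λ̄`-module structure on the Pontryagin dual: `(a • f) m = f (a • m)`. -/
noncomputable instance : Module (PowerSeries (ZMod p)) (PDual p M) where
  smul a f := LinearMap.comp (PDual.lin p M f) (smulLM p M a)
  one_smul f := LinearMap.ext fun m => by
    show PDual.lin p M f ((1 : PowerSeries (ZMod p)) • m) = PDual.lin p M f m
    rw [one_smul]
  mul_smul a b f := LinearMap.ext fun m => by
    show PDual.lin p M f ((a * b) • m) = PDual.lin p M f (b • a • m)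
    rw [mul_comm, mul_smul]
  smul_zero a := LinearMap.ext fun m => rfl
  smul_add a f g := LinearMap.ext fun m => rfl
  add_smul a b f := LinearMap.ext fun m => by
    show PDual.lin p M f ((a + b) • m) =
      PDual.lin p M f (a • m) + PDual.lin p M f (b • m)
    rw [add_smul, map_add]
  zero_smul f := LinearMap.ext fun m => by
    show PDual.lin p M f ((0 : PowerSeries (ZMod p)) • m) = 0
    rw [zero_smul, map_zero]

/-- The `𝔽_p`-subspace of `M` killed by `a ∈ Λ̄`; for `a = T^{p^n}` these are the
`Γ_n`-invariants `M^{Γ_n}` of the corresponding discrete `Γ`-module (and for `a = T` the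
`Γ`-invariants `M^Γ = M[T]`). -/
def invariantsKer (a : PowerSeries (ZMod p)) : Submodule (ZMod p) M where
  carrier := {m | a • m = 0}
  zero_mem' := smul_zero a
  add_mem' := by
    intro x y hx hy
    show a • (x + y) = 0
    rw [smul_add, hx, hy, add_zero]
  smul_mem' := by
    intro c m hm
    show a • c • m = 0
    rw [← smul_comm c a m, hm, smul_zero]

/-- The Pontryagin dual `Λ̄^∨` of `Λ̄ = 𝔽_p[[T]]` itself, realized as
`𝔽_p((T))/𝔽_p[[T]]`. -/
def PontLambdaDual : Type :=
  LaurentSeries (ZMod p) ⧸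
    LinearMap.range (Algebra.linearMap (PowerSeries (ZMod p)) (LaurentSeries (ZMod p)))

noncomputable instance : AddCommGroup (PontLambdaDual p) :=
  inferInstanceAs (AddCommGroup (LaurentSeries (ZMod p) ⧸
    LinearMap.range (Algebra.linearMap (PowerSeries (ZMod p)) (LaurentSeries (ZMod p)))))

noncomputable instance : Module (PowerSeries (ZMod p)) (PontLambdaDual p) :=
  inferInstanceAs (Module (PowerSeries (ZMod p)) (LaurentSeries (ZMod p) ⧸
    LinearMap.range (Algebra.linearMap (PowerSeries (ZMod p)) (LaurentSeries (ZMod p)))))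

end PontryaginDual


section Aux

open PowerSeries Module Submodule LinearMap

variable (p : ℕ) [Fact p.Prime]

/-- On any module carrying both a `ZMod p`- and a `PowerSeries (ZMod p)`-action, the action of
the constant `C c` agrees with that of `c` (both equal `c.val`-fold addition). -/
lemma Cc_smul {A : Type*} [AddCommMonoid A] [Module (ZMod p) A]
    [Module (PowerSeries (ZMod p)) A] (c : ZMod p) (x : A) :
    (PowerSeries.C c) • x = c • x := by
  have h1 : (PowerSeries.C c) = ((c.val : ℕ) : PowerSeries (ZMod p)) := by
    rw [← map_natCast (PowerSeries.C (R := ZMod p)) c.val, ZMod.natCast_val, ZMod.cast_id]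
  rw [h1, Nat.cast_smul_eq_nsmul, ← Nat.cast_smul_eq_nsmul (ZMod p), ZMod.natCast_val,
    ZMod.cast_id]

variable (M : Type) [AddCommGroup M] [Module (ZMod p) M]
  [Module (PowerSeries (ZMod p)) M] [SMulCommClass (ZMod p) (PowerSeries (ZMod p)) M]

instance : Module (ZMod p) (PDual p M) :=
  inferInstanceAs (Module (ZMod p) (M →ₗ[ZMod p] ZMod p))

/-- Multiplication by `a` on the dual, as a `ZMod p`-linear endomorphism. -/
noncomputable def tau (a : PowerSeries (ZMod p)) : PDual p M →ₗ[ZMod p] PDual p M where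
  toFun f := a • f
  map_add' f g := smul_add a f g
  map_smul' c f := by
    show a • (c • f) = c • (a • f)
    rw [← Cc_smul p c f, ← Cc_smul p c (a • f), ← mul_smul, mul_comm, mul_smul]

lemma inv_eq_ker (a : PowerSeries (ZMod p)) :
    invariantsKer p M a = LinearMap.ker (smulLM p M a) := by
  ext m; exact Iff.rfl

/-- Restriction of functionals to the `a`-torsion submodule. -/
def resMap (a : PowerSeries (ZMod p)) :
    PDual p M →ₗ[ZMod p] ((invariantsKer p M a) →ₗ[ZMod p] ZMod p) where
  toFun f := (PDual.lin p M f).domRestrict _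
  map_add' f g := rfl
  map_smul' c f := rfl

lemma exists_extend' {W : Submodule (ZMod p) M} (g : W →ₗ[ZMod p] ZMod p) :
    ∃ f : M →ₗ[ZMod p] ZMod p, ∀ w : W, f w = g w := by
  obtain ⟨f, hf⟩ := Subspace.dualRestrict_surjective (W := W) g
  exact ⟨f, fun w => by rw [← hf]; rfl⟩

lemma resMap_surjective (a : PowerSeries (ZMod p)) :
    Function.Surjective (resMap p M a) := by
  intro g
  obtain ⟨f, hf⟩ := exists_extend' p M g
  exact ⟨f, LinearMap.ext fun w => hf w⟩

lemma ker_resMap (a : PowerSeries (ZMod p)) :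
    LinearMap.ker (resMap p M a) = LinearMap.range (tau p M a) := by
  ext f
  simp only [LinearMap.mem_ker, LinearMap.mem_range]
  constructor
  · intro hf
    set φ := smulLM p M a with hφ
    have hker : LinearMap.ker φ ≤ LinearMap.ker (PDual.lin p M f) := by
      intro m hm
      have hm' : m ∈ invariantsKer p M a := by rw [inv_eq_ker]; exact hm
      have := LinearMap.congr_fun hf ⟨m, hm'⟩
      have h' : ((resMap p M a) f) ⟨m, hm'⟩ = 0 := by simpa using this
      exact h'
    set fbar : (M ⧸ LinearMap.ker φ) →ₗ[ZMod p] ZMod p :=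
      (LinearMap.ker φ).liftQ (PDual.lin p M f) hker with hfbar
    set e := φ.quotKerEquivRange with he
    obtain ⟨h, hh⟩ := exists_extend' p M
      (fbar.comp (e.symm : LinearMap.range φ →ₗ[ZMod p] M ⧸ LinearMap.ker φ))
    refine ⟨h, ?_⟩
    have key : ∀ m : M, PDual.lin p M h (a • m) = PDual.lin p M f m := by
      intro m
      have hmem : φ m ∈ LinearMap.range φ := LinearMap.mem_range_self φ m
      have e1 : e.symm ⟨φ m, hmem⟩ = Submodule.Quotient.mk m := by
        rw [LinearEquiv.symm_apply_eq]
        exact (Subtype.ext (φ.quotKerEquivRange_apply_mk m)).symm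
      have h2 := hh ⟨φ m, hmem⟩
      simp only [LinearMap.comp_apply, LinearEquiv.coe_coe] at h2
      rw [e1] at h2
      exact h2.trans rfl
    show (PDual.lin p M h).comp (smulLM p M a) = PDual.lin p M f
    exact LinearMap.ext key
  · rintro ⟨g, rfl⟩
    show (PDual.lin p M (a • g)).domRestrict _ = 0
    apply LinearMap.ext
    rintro ⟨w, hw⟩
    have hw' : a • w = 0 := hw
    show PDual.lin p M g (a • w) = 0
    rw [hw', map_zero]

/-- The cokernel of `a` on the dual is the dual of the `a`-torsion of `M`. -/
noncomputable def cokerEquiv (a : PowerSeries (ZMod p)) :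
    (PDual p M ⧸ LinearMap.range (tau p M a)) ≃ₗ[ZMod p]
      ((invariantsKer p M a) →ₗ[ZMod p] ZMod p) :=
  (Submodule.quotEquivOfEq _ _ (ker_resMap p M a).symm).trans
    ((resMap p M a).quotKerEquivOfSurjective (resMap_surjective p M a))

lemma finrank_coker (a : PowerSeries (ZMod p))
    [FiniteDimensional (ZMod p) (invariantsKer p M a)] :
    Module.finrank (ZMod p) (PDual p M ⧸ LinearMap.range (tau p M a)) =
      Module.finrank (ZMod p) (invariantsKer p M a) := by
  rw [(cokerEquiv p M a).finrank_eq]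
  exact Subspace.dual_finrank_eq

/-- The first `m` coefficients, on a pair of power series. -/
noncomputable def coeffs (m : ℕ) :
    (Fin 2 → PowerSeries (ZMod p)) →ₗ[ZMod p] (Fin 2 → Fin m → ZMod p) where
  toFun x i j := PowerSeries.coeff j (x i)
  map_add' x y := by funext i j; simp
  map_smul' c x := by funext i j; simp

lemma coeffs_surjective (m : ℕ) : Function.Surjective (coeffs p m) := by
  intro v
  refine ⟨fun i => PowerSeries.mk fun j => if h : j < m then v i ⟨j, h⟩ else 0, ?_⟩
  funext i j
  simp [coeffs, PowerSeries.coeff_mk, j.isLt]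

/-- Multiplication by `a` on pairs of power series, as a `ZMod p`-linear map. -/
noncomputable def sm2 (a : PowerSeries (ZMod p)) :
    (Fin 2 → PowerSeries (ZMod p)) →ₗ[ZMod p] (Fin 2 → PowerSeries (ZMod p)) where
  toFun x := a • x
  map_add' x y := smul_add a x y
  map_smul' c x := smul_comm a c x

lemma ker_coeffs (m : ℕ) :
    LinearMap.ker (coeffs p m) = LinearMap.range (sm2 p ((PowerSeries.X : _) ^ m)) := by
  ext x
  simp only [LinearMap.mem_ker, LinearMap.mem_range]
  constructor
  · intro hx
    have hdvd : ∀ i, (PowerSeries.X : PowerSeries (ZMod p)) ^ m ∣ x i := fun i =>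
      PowerSeries.X_pow_dvd_iff.mpr fun j hj => by
        have := congrFun (congrFun hx i) ⟨j, hj⟩
        simpa [coeffs] using this
    choose y hy using hdvd
    refine ⟨y, funext fun i => ?_⟩
    show (PowerSeries.X : PowerSeries (ZMod p)) ^ m • y i = x i
    rw [smul_eq_mul, ← hy i]
  · rintro ⟨y, rfl⟩
    funext i j
    show PowerSeries.coeff j ((PowerSeries.X : PowerSeries (ZMod p)) ^ m • y i) = 0
    rw [smul_eq_mul]
    exact PowerSeries.X_pow_dvd_iff.mp ⟨y i, rfl⟩ j j.isLt

noncomputable def quotEquiv2 (m : ℕ) :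
    ((Fin 2 → PowerSeries (ZMod p)) ⧸ LinearMap.range (sm2 p ((PowerSeries.X : _) ^ m)))
      ≃ₗ[ZMod p] (Fin 2 → Fin m → ZMod p) :=
  (Submodule.quotEquivOfEq _ _ (ker_coeffs p m).symm).trans
    ((coeffs p m).quotKerEquivOfSurjective (coeffs_surjective p m))

lemma finrank_quot2 (m : ℕ) :
    Module.finrank (ZMod p) ((Fin 2 → PowerSeries (ZMod p)) ⧸
      LinearMap.range (sm2 p ((PowerSeries.X : _) ^ m))) = 2 * m := by
  rw [(quotEquiv2 p m).finrank_eq]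
  simp [Module.finrank_pi_fintype, Module.finrank_pi]

/-- The linear combination map `Λ² → M^∨` attached to a pair of functionals. -/
noncomputable def lc (f : Fin 2 → PDual p M) :
    (Fin 2 → PowerSeries (ZMod p)) →ₗ[PowerSeries (ZMod p)] PDual p M where
  toFun x := ∑ i, x i • f i
  map_add' x y := by
    simp only [Pi.add_apply, add_smul]
    rw [Finset.sum_add_distrib]
  map_smul' a x := by
    simp only [Pi.smul_apply, smul_eq_mul, mul_smul, RingHom.id_apply]
    rw [Finset.smul_sum]

/-- The same linear combination map, as a `ZMod p`-linear map. -/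
noncomputable def lcR (f : Fin 2 → PDual p M) :
    (Fin 2 → PowerSeries (ZMod p)) →ₗ[ZMod p] PDual p M where
  toFun x := ∑ i, x i • f i
  map_add' x y := (lc p M f).map_add x y
  map_smul' c x := by
    show ∑ i, (c • x) i • f i = c • ∑ i, x i • f i
    rw [Finset.smul_sum]
    refine Finset.sum_congr rfl fun i _ => ?_
    rw [Pi.smul_apply, ← Cc_smul p c (x i), smul_eq_mul, mul_smul, Cc_smul p c (x i • f i)]

lemma lcR_eq_lc (f : Fin 2 → PDual p M) (x : Fin 2 → PowerSeries (ZMod p)) :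
    lcR p M f x = lc p M f x := rfl

lemma lc_apply (f : Fin 2 → PDual p M) (x : Fin 2 → PowerSeries (ZMod p)) :
    lc p M f x = ∑ i, x i • f i := rfl

end Aux

/-- Let `Γ ≅ ℤ_p` with subgroups `Γ_n = Γ^{p^n}`, and let `M` be a discrete `Γ`-module over
`𝔽_p`, i.e. a module over `Λ̄ = 𝔽_p[[Γ]] ≅ 𝔽_p[[T]]` (with a topological generator of `Γ`
acting as `1 + T`, so that `M^{Γ_n} = M[T^{p^n}]` in characteristic `p`), which is cofinitely
generated over `Λ̄` (its Pontryagin dual is finitely generated).  If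
`dim_{𝔽_p} M^{Γ_n} = 2·p^n` for all `n ≥ 0`, then the Pontryagin dual `M^∨` is a free
`Λ̄`-module of rank `2`. -/
theorem dual_free_rank_two_of_invariants_growth (p : ℕ) [Fact p.Prime]
    (M : Type) [AddCommGroup M] [Module (ZMod p) M] [Module (PowerSeries (ZMod p)) M]
    [SMulCommClass (ZMod p) (PowerSeries (ZMod p)) M]
    [Module.Finite (PowerSeries (ZMod p)) (PDual p M)]
    (hinv : ∀ n : ℕ, Module.finrank (ZMod p)
      (invariantsKer p M ((PowerSeries.X : PowerSeries (ZMod p)) ^ p ^ n)) = 2 * p ^ n) :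
    Module.Free (PowerSeries (ZMod p)) (PDual p M) ∧
      Module.rank (PowerSeries (ZMod p)) (PDual p M) = 2 := by
  classical
  have hp1 : 1 < p := (Fact.out : p.Prime).one_lt
  -- finite-dimensionality of the invariants
  have hfd : ∀ n : ℕ, FiniteDimensional (ZMod p)
      (invariantsKer p M ((PowerSeries.X : PowerSeries (ZMod p)) ^ p ^ n)) := fun n =>
    FiniteDimensional.of_finrank_pos (by rw [hinv n]; positivity)
  -- the cokernel dimensions
  have hcoker : ∀ n : ℕ, Module.finrank (ZMod p)
      (PDual p M ⧸ LinearMap.range (tau p M ((PowerSeries.X : PowerSeries (ZMod p)) ^ p ^ n)))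
        = 2 * p ^ n := fun n => by
    haveI := hfd n
    rw [finrank_coker p M _, hinv n]
  have hcokerFD : ∀ n : ℕ, FiniteDimensional (ZMod p)
      (PDual p M ⧸ LinearMap.range (tau p M ((PowerSeries.X : PowerSeries (ZMod p)) ^ p ^ n))) :=
    fun n => by
      haveI := hfd n
      exact (cokerEquiv p M _).symm.finiteDimensional
  -- choose two generators lifting a basis of the cokernel of X
  haveI : FiniteDimensional (ZMod p)
      (PDual p M ⧸ LinearMap.range (tau p M ((PowerSeries.X : PowerSeries (ZMod p)) ^ p ^ 0))) :=
    hcokerFD 0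
  have hQ0 : Module.finrank (ZMod p)
      (PDual p M ⧸ LinearMap.range (tau p M ((PowerSeries.X : PowerSeries (ZMod p)) ^ p ^ 0)))
        = 2 := by rw [hcoker 0]; simp
  let b : Module.Basis (Fin 2) (ZMod p)
      (PDual p M ⧸ LinearMap.range (tau p M ((PowerSeries.X : PowerSeries (ZMod p)) ^ p ^ 0))) :=
    Module.finBasisOfFinrankEq _ _ hQ0
  have hlift : ∀ i, ∃ g : PDual p M, Submodule.Quotient.mk g = b i := fun i =>
    Submodule.mkQ_surjective _ (b i)
  choose f hf using hlift
  -- the span of the generators is everything (Nakayama)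
  have hspan : Submodule.span (PowerSeries (ZMod p)) (Set.range f) = ⊤ := by
    set S := Submodule.span (PowerSeries (ZMod p)) (Set.range f) with hS
    haveI : Module.Finite (PowerSeries (ZMod p)) (PDual p M ⧸ S) :=
      Module.Finite.of_surjective S.mkQ (Submodule.mkQ_surjective S)
    have hle : (⊤ : Submodule (PowerSeries (ZMod p)) (PDual p M ⧸ S)) ≤
        (Ideal.span {(PowerSeries.X : PowerSeries (ZMod p))}) • ⊤ := by
      rintro z -
      obtain ⟨g, rfl⟩ := Submodule.mkQ_surjective S z
      have hb : (Submodule.Quotient.mk g :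
          PDual p M ⧸ LinearMap.range (tau p M ((PowerSeries.X : PowerSeries (ZMod p)) ^ p ^ 0)))
            ∈ Submodule.span (ZMod p) (Set.range b) := by
        rw [b.span_eq]; trivial
      rw [Submodule.mem_span_range_iff_exists_fun] at hb
      obtain ⟨c, hc⟩ := hb
      have h1 : g - ∑ i, c i • f i ∈
          LinearMap.range (tau p M ((PowerSeries.X : PowerSeries (ZMod p)) ^ p ^ 0)) := by
        rw [← Submodule.Quotient.mk_eq_zero, Submodule.Quotient.mk_sub]
        have hs : (Submodule.Quotient.mk (∑ i, c i • f i) :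
            PDual p M ⧸ LinearMap.range (tau p M
              ((PowerSeries.X : PowerSeries (ZMod p)) ^ p ^ 0))) = ∑ i, c i • b i := by
          rw [← Submodule.mkQ_apply, map_sum]
          exact Finset.sum_congr rfl fun i _ => by
            rw [map_smul, Submodule.mkQ_apply, hf i]
        rw [hs, hc, sub_self]
      obtain ⟨h, hh⟩ := h1
      have hg : g = (∑ i, (PowerSeries.C (c i)) • f i) +
          ((PowerSeries.X : PowerSeries (ZMod p)) ^ p ^ 0) • h := by
        have ht : tau p M ((PowerSeries.X : PowerSeries (ZMod p)) ^ p ^ 0) h =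
            ((PowerSeries.X : PowerSeries (ZMod p)) ^ p ^ 0) • h := rfl
        rw [← ht, hh]
        have : ∀ i, (PowerSeries.C (c i)) • f i = c i • f i := fun i =>
          Cc_smul p (c i) (f i)
        simp only [this]
        abel
      rw [hg, map_add, map_sum]
      have h2 : ∀ i ∈ Finset.univ, S.mkQ ((PowerSeries.C (c i)) • f i) = 0 := by
        intro i _
        rw [map_smul, Submodule.mkQ_apply, (Submodule.Quotient.mk_eq_zero S).mpr
          (Submodule.subset_span (Set.mem_range_self i) : f i ∈ S), smul_zero]
      rw [Finset.sum_congr rfl h2, Finset.sum_const_zero, zero_add, map_smul]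
      have hXmem : ((PowerSeries.X : PowerSeries (ZMod p)) ^ p ^ 0) ∈
          Ideal.span {(PowerSeries.X : PowerSeries (ZMod p))} := by
        simp only [pow_zero, pow_one]
        exact Ideal.subset_span rfl
      exact Submodule.smul_mem_smul hXmem Submodule.mem_top
    have hjac : (Ideal.span {(PowerSeries.X : PowerSeries (ZMod p))}) ≤
        Ideal.jacobson ⊥ := by
      rw [IsLocalRing.jacobson_eq_maximalIdeal ⊥ bot_ne_top]
      exact le_of_eq PowerSeries.maximalIdeal_eq_span_X.symm
    have htop : (⊤ : Submodule (PowerSeries (ZMod p)) (PDual p M ⧸ S)) = ⊥ :=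
      Submodule.eq_bot_of_le_smul_of_le_jacobson_bot _ _ Module.Finite.fg_top hle hjac
    refine Submodule.eq_top_iff'.mpr fun g => ?_
    have : (Submodule.Quotient.mk g : PDual p M ⧸ S) = 0 := by
      have : (Submodule.Quotient.mk g : PDual p M ⧸ S) ∈
          (⊤ : Submodule (PowerSeries (ZMod p)) (PDual p M ⧸ S)) := trivial
      rw [htop] at this
      simpa using this
    exact (Submodule.Quotient.mk_eq_zero S).mp this
  -- the linear-combination map is surjective
  have hsurj : Function.Surjective (lc p M f) := by
    intro g
    have hmem : g ∈ Submodule.span (PowerSeries (ZMod p)) (Set.range f) := by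
      rw [hspan]; trivial
    have hle : Submodule.span (PowerSeries (ZMod p)) (Set.range f) ≤
        LinearMap.range (lc p M f) := by
      rw [Submodule.span_le]
      rintro _ ⟨i, rfl⟩
      refine ⟨Pi.single i 1, ?_⟩
      rw [lc_apply, Finset.sum_eq_single i]
      · simp
      · intro j _ hj
        rw [Pi.single_eq_of_ne hj, zero_smul]
      · intro hi; exact absurd (Finset.mem_univ i) hi
    exact hle hmem
  -- the linear-combination map is injective
  have hinj : Function.Injective (lc p M f) := by
    rw [← LinearMap.ker_eq_bot, eq_bot_iff]
    intro x hx
    have hx0 : lc p M f x = 0 := hx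
    rw [Submodule.mem_bot]
    have hmem : ∀ n : ℕ, x ∈ LinearMap.range
        (sm2 p ((PowerSeries.X : PowerSeries (ZMod p)) ^ p ^ n)) := by
      intro n
      haveI := hfd n
      haveI := hcokerFD n
      haveI : FiniteDimensional (ZMod p) ((Fin 2 → PowerSeries (ZMod p)) ⧸
          LinearMap.range (sm2 p ((PowerSeries.X : PowerSeries (ZMod p)) ^ p ^ n))) :=
        (quotEquiv2 p (p ^ n)).symm.finiteDimensional
      set a := (PowerSeries.X : PowerSeries (ZMod p)) ^ p ^ n with ha
      set subN := LinearMap.range (tau p M a) with hsubN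
      set sub2 := LinearMap.range (sm2 p a) with hsub2
      let q0 : (Fin 2 → PowerSeries (ZMod p)) →ₗ[ZMod p] (PDual p M ⧸ subN) :=
        subN.mkQ.comp (lcR p M f)
      have hker : sub2 ≤ LinearMap.ker q0 := by
        rintro _ ⟨y, rfl⟩
        simp only [LinearMap.mem_ker]
        have he : lcR p M f (sm2 p a y) = tau p M a (lc p M f y) := by
          show ∑ i, (a • y) i • f i = a • ∑ i, y i • f i
          rw [Finset.smul_sum]
          exact Finset.sum_congr rfl fun i _ => by
            rw [Pi.smul_apply, smul_eq_mul, mul_smul]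
        show subN.mkQ (lcR p M f (sm2 p a y)) = 0
        rw [he, Submodule.mkQ_apply, Submodule.Quotient.mk_eq_zero]
        exact LinearMap.mem_range_self _ _
      let q := Submodule.liftQ sub2 q0 hker
      have hqsurj : Function.Surjective q := by
        intro z
        obtain ⟨g, rfl⟩ := Submodule.mkQ_surjective subN z
        obtain ⟨y, hy⟩ := hsurj g
        refine ⟨Submodule.Quotient.mk y, ?_⟩
        show q0 y = subN.mkQ g
        show subN.mkQ (lcR p M f y) = subN.mkQ g
        rw [lcR_eq_lc, hy]
      have hrk : Module.finrank (ZMod p) ((Fin 2 → PowerSeries (ZMod p)) ⧸ sub2) =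
          Module.finrank (ZMod p) (PDual p M ⧸ subN) := by
        rw [hsub2, ha, finrank_quot2, hsubN, ha, hcoker n]
      have hqinj : Function.Injective q := by
        rw [← LinearMap.ker_eq_bot]
        have h1 := LinearMap.finrank_range_add_finrank_ker q
        rw [LinearMap.range_eq_top.mpr hqsurj, finrank_top, ← hrk] at h1
        have h2 : Module.finrank (ZMod p) (LinearMap.ker q) = 0 := by omega
        exact Submodule.finrank_eq_zero.mp h2
      have hq0 : q (Submodule.Quotient.mk x) = 0 := by
        show q0 x = 0
        show subN.mkQ (lcR p M f x) = 0
        rw [lcR_eq_lc, hx0, map_zero]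
      have hx2 : (Submodule.Quotient.mk x : (Fin 2 → PowerSeries (ZMod p)) ⧸ sub2) = 0 := by
        apply hqinj
        rw [hq0, map_zero]
      exact (Submodule.Quotient.mk_eq_zero _).mp hx2
    funext i
    apply PowerSeries.ext
    intro j
    obtain ⟨y, hy⟩ := hmem j
    have hxy : x i = (PowerSeries.X : PowerSeries (ZMod p)) ^ p ^ j * y i := by
      rw [← hy]
      show ((PowerSeries.X : PowerSeries (ZMod p)) ^ p ^ j • y) i = _
      rw [Pi.smul_apply, smul_eq_mul]
    have hdvd : (PowerSeries.X : PowerSeries (ZMod p)) ^ p ^ j ∣ x i := ⟨y i, hxy⟩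
    have hj : j < p ^ j := Nat.lt_pow_self hp1
    simpa using PowerSeries.X_pow_dvd_iff.mp hdvd j hj
  let e := LinearEquiv.ofBijective (lc p M f) ⟨hinj, hsurj⟩
  constructor
  · exact Module.Free.of_equiv e
  · rw [← e.rank_eq]
    exact rank_fin_fun 2
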